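/- Let A, B, C be affinely independent points in ℝ² such that dist(A,B) ≥ dist(C,A) ≥ dist(B,C) (so AB is a longest edge and BC is a shortest edge of the triangle ABC). Let X and Y be points of the convex hull of {A,B,C} such that the intersection of the triangles conv{A,C,X} and conv{B,C,Y} has 2-dimensional Lebesgue measure zero (the triangles ACX and BCY are area-disjoint). Then the perimeter of triangle ACX is at most perimeter(ABC) − dist(B,C)/2, or the perimeter of triangle BCY is at most perimeter(ABC) − dist(B,C)/2. -/

import Mathlib

open MeasureTheory

noncomputable section

/-- The Euclidean plane. -/
abbrev Plane : Type := EuclideanSpace ℝ (Fin 2)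

/-- The perimeter of the triangle on three points. -/
def trianglePerimeter (P Q R : Plane) : ℝ := dist P Q + dist Q R + dist R P

lemma combo_mem_triangle {P Q R : Plane} {p q r : ℝ} (hp : 0 ≤ p) (hq : 0 ≤ q) (hr : 0 ≤ r)
    (hsum : p + q + r = 1) : p • P + q • Q + r • R ∈ convexHull ℝ ({P, Q, R} : Set Plane) := by
  have := (convex_convexHull ℝ ({P, Q, R} : Set Plane)).sum_mem
    (t := (Finset.univ : Finset (Fin 3))) (w := ![p, q, r]) (z := ![P, Q, R])
    (by intro i _; fin_cases i <;> assumption)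
    (by simp [Fin.sum_univ_three, hsum])
    (by intro i _; fin_cases i <;> exact subset_convexHull ℝ _ (by simp))
  simpa [Fin.sum_univ_three] using this

lemma combo_mem_interior {P Q R : Plane} (h : AffineIndependent ℝ ![P, Q, R]) {p q r : ℝ}
    (hp : 0 < p) (hq : 0 < q) (hr : 0 < r) (hsum : p + q + r = 1) :
    p • P + q • Q + r • R ∈ interior (convexHull ℝ ({P, Q, R} : Set Plane)) := by
  have htop : affineSpan ℝ (Set.range ![P, Q, R]) = ⊤ := by
    rw [h.affineSpan_eq_top_iff_card_eq_finrank_add_one]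
    simp [finrank_euclideanSpace_fin]
  let b : AffineBasis (Fin 3) ℝ Plane := ⟨![P, Q, R], h, htop⟩
  have hrange : Set.range (b : Fin 3 → Plane) = ({P, Q, R} : Set Plane) := by
    show Set.range ![P, Q, R] = _
    simp [Matrix.range_cons, Matrix.range_empty]; ext x; simp; tauto
  have hw : ∑ i, (![p, q, r]) i = 1 := by simp [Fin.sum_univ_three, hsum]
  have hcombo : p • P + q • Q + r • R
      = Finset.univ.affineCombination ℝ (b : Fin 3 → Plane) ![p, q, r] := by
    rw [Finset.univ.affineCombination_eq_linear_combination _ _ hw]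
    show _ = ∑ i, (![p, q, r]) i • (![P, Q, R]) i
    simp [Fin.sum_univ_three]
  rw [← hrange, b.interior_convexHull, hcombo]
  intro i
  rw [b.coord_apply_combination_of_mem (Finset.mem_univ i) hw]
  fin_cases i <;> simpa

lemma not_collinear_combo {P Q R S : Plane} (h : ¬ Collinear ℝ ({P, Q, R} : Set Plane))
    {p q r : ℝ} (hsum : p + q + r = 1) (hr : r ≠ 0) (hS : S = p • P + q • Q + r • R) :
    ¬ Collinear ℝ ({P, Q, S} : Set Plane) := by
  intro hc
  apply h
  have hR : R = r⁻¹ • (S - p • P - q • Q) := by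
    rw [hS]; match_scalars <;> field_simp <;> ring
  rw [collinear_iff_of_mem (Set.mem_insert P {Q, S})] at hc
  obtain ⟨v, hv⟩ := hc
  obtain ⟨tQ, hQ⟩ := hv Q (by simp)
  obtain ⟨tS, hS'⟩ := hv S (by simp)
  rw [collinear_iff_of_mem (Set.mem_insert P {Q, R})]
  refine ⟨v, fun x hx => ?_⟩
  simp only [Set.mem_insert_iff, Set.mem_singleton_iff] at hx
  rcases hx with rfl | rfl | rfl
  · exact ⟨0, by simp⟩
  · exact ⟨tQ, hQ⟩
  · refine ⟨r⁻¹ * (tS - q * tQ), ?_⟩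
    rw [hR, hS', hQ]
    simp only [vadd_eq_add]
    match_scalars
    · field_simp
    · field_simp; linarith

lemma triangle_decomp {P Q R X : Plane} (hX : X ∈ convexHull ℝ ({P, Q, R} : Set Plane)) :
    ∃ p q r : ℝ, 0 ≤ p ∧ 0 ≤ q ∧ 0 ≤ r ∧ p + q + r = 1 ∧ X = p • P + q • Q + r • R := by
  rw [show ({P, Q, R} : Set Plane) = insert P {Q, R} from rfl,
    convexHull_insert (by simp), convexHull_pair, mem_convexJoin] at hX
  obtain ⟨w, hw, z, hz, hXz⟩ := hX
  rw [Set.mem_singleton_iff] at hw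
  subst hw
  obtain ⟨u, v, hu, hv, huv, hzz⟩ := hz
  obtain ⟨e, f, he, hf, hef, hX2⟩ := hXz
  refine ⟨e, f * u, f * v, he, by positivity, by positivity, by nlinarith, ?_⟩
  rw [← hX2, ← hzz]
  module

set_option maxHeartbeats 2000000 in
/-- If `AB` is a longest and `BC` a shortest side of a (nondegenerate)
triangle `ABC`, and `X`, `Y` are points of the triangle such that the triangles `ACX`
and `BCY` are area-disjoint, then one of `ACX`, `BCY` has perimeter at most
`perimeter(ABC) − dist(B,C)/2`. -/
theorem shrinking_perimeter (A B C X Y : Plane)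
    (hind : AffineIndependent ℝ ![A, B, C])
    (hlong : dist C A ≤ dist A B) (hshort : dist B C ≤ dist C A)
    (hX : X ∈ convexHull ℝ {A, B, C}) (hY : Y ∈ convexHull ℝ {A, B, C})
    (hdisj : volume ((convexHull ℝ {A, C, X}) ∩ (convexHull ℝ {B, C, Y})) = 0) :
    trianglePerimeter A C X ≤ trianglePerimeter A B C - dist B C / 2 ∨
    trianglePerimeter B C Y ≤ trianglePerimeter A B C - dist B C / 2 := by
  have hM : (midpoint ℝ A B : Plane) = (2⁻¹ : ℝ) • (A + B) := by
    rw [midpoint_eq_smul_add]; norm_num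
  set M : Plane := midpoint ℝ A B with hMdef
  obtain ⟨a, b, c, ha, hb, hc, habc, hXd⟩ := triangle_decomp hX
  obtain ⟨a', b', c', ha', hb', hc', habc', hYd⟩ := triangle_decomp hY
  have hMA : dist M A = dist A B / 2 := by
    rw [hMdef, dist_midpoint_left]; norm_num; ring
  have hMB : dist M B = dist A B / 2 := by
    rw [hMdef, dist_midpoint_right, dist_comm]; norm_num; ring
  have hMC : dist M C ≤ (dist A C + dist B C) / 2 := by
    have h2 := dist_midpoint_midpoint_le A B C C
    rwa [midpoint_self] at h2
  have hACCA : dist A C = dist C A := dist_comm A C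
  have hnnBC : (0:ℝ) ≤ dist B C := dist_nonneg
  by_cases hab : b ≤ a
  · -- X is in triangle A C M
    left
    have hXeq : X = (a - b) • A + c • C + (2 * b) • M := by
      rw [hXd, hM]; module
    have hXM : X ∈ convexHull ℝ ({A, C, M} : Set Plane) := by
      rw [hXeq]
      exact combo_mem_triangle (by linarith) hc (by linarith) (by linarith)
    have hf : ConvexOn ℝ (convexHull ℝ ({A, C, M} : Set Plane))
        (fun z => dist z C + dist z A) :=
      (convexOn_dist C (convex_convexHull ℝ _)).add (convexOn_dist A (convex_convexHull ℝ _))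
    obtain ⟨y, hy, hle⟩ := hf.exists_ge_of_mem_convexHull (subset_convexHull ℝ _) hXM
    have key : dist X C + dist X A ≤ dist A B + dist B C / 2 := by
      simp only [Set.mem_insert_iff, Set.mem_singleton_iff] at hy
      rcases hy with h | h | h <;> rw [h] at hle
      · simp only [dist_self] at hle; linarith
      · simp only [dist_self] at hle; linarith
      · have : dist M C + dist M A ≤ dist A B + dist B C / 2 := by
          rw [hMA]; linarith
        linarith
    simp only [trianglePerimeter]
    have h1 : dist C X = dist X C := dist_comm C X
    linarith
  · by_cases hab' : a' ≤ b'
    · -- Y is in triangle B C M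
      right
      have hYeq : Y = (b' - a') • B + c' • C + (2 * a') • M := by
        rw [hYd, hM]; module
      have hYM : Y ∈ convexHull ℝ ({B, C, M} : Set Plane) := by
        rw [hYeq]
        exact combo_mem_triangle (by linarith) hc' (by linarith) (by linarith)
      have hf : ConvexOn ℝ (convexHull ℝ ({B, C, M} : Set Plane))
          (fun z => dist z C + dist z B) :=
        (convexOn_dist C (convex_convexHull ℝ _)).add (convexOn_dist B (convex_convexHull ℝ _))
      obtain ⟨y, hy, hle⟩ := hf.exists_ge_of_mem_convexHull (subset_convexHull ℝ _) hYM
      have key : dist Y C + dist Y B ≤ dist A B + dist C A - dist B C / 2 := by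
        simp only [Set.mem_insert_iff, Set.mem_singleton_iff] at hy
        have hCB : dist C B = dist B C := dist_comm C B
        rcases hy with h | h | h <;> rw [h] at hle
        · simp only [dist_self] at hle
          linarith
        · simp only [dist_self] at hle
          linarith
        · have : dist M C + dist M B ≤ dist A B + dist C A - dist B C / 2 := by
            rw [hMB]; linarith
          linarith
      simp only [trianglePerimeter]
      have h1 : dist C Y = dist Y C := dist_comm C Y
      have h2 : dist Y B = dist B Y := dist_comm Y B
      linarith
    · -- contradiction with area-disjointness
      exfalso
      push_neg at hab hab'
      have hb0 : 0 < b := lt_of_le_of_lt ha hab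
      have ha'0 : 0 < a' := lt_of_le_of_lt hb' hab'
      have hnc : ¬ Collinear ℝ ({A, B, C} : Set Plane) :=
        affineIndependent_iff_not_collinear_set.mp hind
      have hACB : ¬ Collinear ℝ ({A, C, B} : Set Plane) := by
        have : ({A, C, B} : Set Plane) = {A, B, C} := by ext x; simp; tauto
        rwa [this]
      have hBCA : ¬ Collinear ℝ ({B, C, A} : Set Plane) := by
        have : ({B, C, A} : Set Plane) = {A, B, C} := by ext x; simp; tauto
        rwa [this]
      have hACX : AffineIndependent ℝ ![A, C, X] := by
        rw [affineIndependent_iff_not_collinear_set]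
        exact not_collinear_combo hACB (show a + c + b = 1 by linarith) (ne_of_gt hb0) (by rw [hXd]; module)
      have hBCY : AffineIndependent ℝ ![B, C, Y] := by
        rw [affineIndependent_iff_not_collinear_set]
        exact not_collinear_combo hBCA (show b' + c' + a' = 1 by linarith) (ne_of_gt ha'0) (by rw [hYd]; module)
      -- eliminate c, c'
      have hcc : c = 1 - a - b := by linarith
      have hcc' : c' = 1 - a' - b' := by linarith
      rw [hcc] at hXd
      rw [hcc'] at hYd
      have hden1 : (0:ℝ) < 1 + b - a := by linarith
      have hden2 : (0:ℝ) < 1 + a' - b' := by linarith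
      obtain ⟨r, hr0, hrt', hru'⟩ :
          ∃ r : ℝ, 0 < r ∧ r * (1 + b - a) < 2 * b ∧ r * (1 + a' - b') < 2 * a' := by
        have h1 : 0 < 2 * b / (1 + b - a) := div_pos (by linarith) hden1
        have h2 : 0 < 2 * a' / (1 + a' - b') := div_pos (by linarith) hden2
        have hmin1 := min_le_left (2 * b / (1 + b - a)) (2 * a' / (1 + a' - b'))
        have hmin2 := min_le_right (2 * b / (1 + b - a)) (2 * a' / (1 + a' - b'))
        have hminpos := lt_min h1 h2
        refine ⟨min (2 * b / (1 + b - a)) (2 * a' / (1 + a' - b')) / 2, by linarith, ?_, ?_⟩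
        · rw [← lt_div_iff₀ hden1]; linarith
        · rw [← lt_div_iff₀ hden2]; linarith
      set Z : Plane := r • M + (1 - r) • C with hZdef
      have hZ1 : Z ∈ interior (convexHull ℝ ({A, C, X} : Set Plane)) := by
        have heq : Z = (r * (b - a) / (2 * b)) • A + (1 - r * (1 + b - a) / (2 * b)) • C
            + (r / (2 * b)) • X := by
          rw [hZdef, hXd, hM]
          match_scalars <;> field_simp <;> ring
        rw [heq]
        have h2b : (2:ℝ) * b ≠ 0 := ne_of_gt (by linarith)
        refine combo_mem_interior hACX ?_ ?_ ?_ ?_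
        · exact div_pos (mul_pos hr0 (by linarith)) (by linarith)
        · rw [sub_pos, div_lt_one (by linarith)]; exact hrt'
        · exact div_pos hr0 (by linarith)
        · field_simp
          ring
      have hZ2 : Z ∈ interior (convexHull ℝ ({B, C, Y} : Set Plane)) := by
        have heq : Z = (r * (a' - b') / (2 * a')) • B + (1 - r * (1 + a' - b') / (2 * a')) • C
            + (r / (2 * a')) • Y := by
          rw [hZdef, hYd, hM]
          match_scalars <;> field_simp <;> ring
        rw [heq]
        have h2a : (2:ℝ) * a' ≠ 0 := ne_of_gt (by linarith)
        refine combo_mem_interior hBCY ?_ ?_ ?_ ?_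
        · exact div_pos (mul_pos hr0 (by linarith)) (by linarith)
        · rw [sub_pos, div_lt_one (by linarith)]; exact hru'
        · exact div_pos hr0 (by linarith)
        · field_simp
          ring
      have hopen : IsOpen (interior (convexHull ℝ ({A, C, X} : Set Plane))
          ∩ interior (convexHull ℝ ({B, C, Y} : Set Plane))) :=
        isOpen_interior.inter isOpen_interior
      have hpos : 0 < volume (interior (convexHull ℝ ({A, C, X} : Set Plane))
          ∩ interior (convexHull ℝ ({B, C, Y} : Set Plane))) :=
        hopen.measure_pos volume ⟨Z, hZ1, hZ2⟩
      have hle : volume (interior (convexHull ℝ ({A, C, X} : Set Plane))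
          ∩ interior (convexHull ℝ ({B, C, Y} : Set Plane))) ≤ 0 := by
        rw [← hdisj]
        exact measure_mono (Set.inter_subset_inter interior_subset interior_subset)
      exact hpos.ne' (le_antisymm hle zero_le)
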